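/- Let c be a positive integer with c ≡ 2 (mod 4) and set c₁ = c/2 (so c₁ is odd), and let n be an integer. For each a with 0 ≤ a < c and gcd(a,c) = 1, let d₄(a) denote a residue modulo c₁ satisfying 8·a·d₄(a) ≡ −1 (mod c₁). Then Θ₄(c,n) := ε_{c₁} · Σ_{a mod c, gcd(a,c)=1} (8a | c₁) · e(d₄(a)·n / c₁) equals Θ₁(c₁,n) := conj(ε_{c₁}) · Σ_{a mod c₁, gcd(a,c₁)=1} (a | c₁) · e(a·n / c₁). -/

import Mathlib

open Finset

/-- `e(x) = exp(2πi x)`. -/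
noncomputable def e (x : ℝ) : ℂ := Complex.exp (2 * Real.pi * Complex.I * x)

/-- `ε_d = 1` if `d ≡ 1 (mod 4)` and `ε_d = i` if `d ≡ 3 (mod 4)`. -/
noncomputable def epsd (d : ℕ) : ℂ := if d % 4 = 1 then 1 else Complex.I

lemma e_int_add (m : ℤ) (x : ℝ) : e ((m : ℝ) + x) = e x := by
  unfold e
  push_cast
  rw [mul_add, Complex.exp_add]
  have h : (2 : ℂ) * Real.pi * Complex.I * (m : ℂ) = (m : ℂ) * (2 * Real.pi * Complex.I) := by
    ring
  rw [h, Complex.exp_int_mul_two_pi_mul_I, one_mul]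

/-- for `c ≡ 2 (mod 4)`, `c₁ = c/2`, one has `Θ₄(c,n) = Θ₁(c₁,n)`. -/
theorem stmt_0 (c : ℕ) (hc : c % 4 = 2) (c₁ : ℕ) (hc₁ : c₁ = c / 2) (n : ℤ)
    (d₄ : ℕ → ℤ)
    (hd₄ : ∀ a : ℕ, a < c → Nat.Coprime a c →
      (8 * (a : ℤ) * d₄ a) ≡ -1 [ZMOD (c₁ : ℤ)]) :
    epsd c₁ *
      ∑ a ∈ (Finset.range c).filter (fun a => Nat.Coprime a c),
        (jacobiSym (8 * (a : ℤ)) c₁ : ℂ) * e (((d₄ a * n : ℤ) : ℝ) / (c₁ : ℝ)) =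
    (starRingEnd ℂ) (epsd c₁) *
      ∑ a ∈ (Finset.range c₁).filter (fun a => Nat.Coprime a c₁),
        (jacobiSym (a : ℤ) c₁ : ℂ) * e ((((a : ℤ) * n : ℤ) : ℝ) / (c₁ : ℝ)) := by
  haveI hne : NeZero c₁ := ⟨by omega⟩
  have hc2 : c = 2 * c₁ := by omega
  have hodd : c₁ % 2 = 1 := by omega
  have hoddO : Odd c₁ := Nat.odd_iff.mpr hodd
  have hcop2 : Nat.Coprime 2 c₁ := Nat.coprime_two_left.mpr hoddO
  have hcop8 : Nat.Coprime 8 c₁ := by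
    have : (8 : ℕ) = 2 ^ 3 := by norm_num
    rw [this]
    exact Nat.Coprime.pow_left _ hcop2
  -- facts about elements of the left index set
  have hmemS : ∀ a ∈ (Finset.range c).filter (fun a => Nat.Coprime a c),
      a < c ∧ Nat.Coprime a c := by
    intro a ha
    simp only [Finset.mem_filter, Finset.mem_range] at ha
    exact ha
  -- basic congruence in ZMod c₁
  have hzm : ∀ a : ℕ, a < c → Nat.Coprime a c →
      (8 : ZMod c₁) * (a : ZMod c₁) * ((d₄ a : ℤ) : ZMod c₁) = -1 := by
    intro a ha hco
    have := (ZMod.intCast_eq_intCast_iff _ _ _).mpr (hd₄ a ha hco)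
    push_cast at this
    exact_mod_cast this
  have hvalcast : ∀ x : ZMod c₁, ((x.val : ℕ) : ZMod c₁) = x := ZMod.natCast_rightInverse
  have hodd_a : ∀ a : ℕ, Nat.Coprime a c → a % 2 = 1 := by
    intro a hco
    have h2 : (2 : ℕ) ∣ c := by omega
    have := Nat.Coprime.coprime_dvd_right h2 hco
    have := Nat.odd_iff.mp (Nat.coprime_two_right.mp this)
    omega
  have hcop_a : ∀ a : ℕ, Nat.Coprime a c → Nat.Coprime a c₁ := by
    intro a hco
    exact Nat.Coprime.coprime_dvd_right ⟨2, by omega⟩ hco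
  -- the key sum identity
  have key : ∑ a ∈ (Finset.range c).filter (fun a => Nat.Coprime a c),
        (jacobiSym (8 * (a : ℤ)) c₁ : ℂ) * e (((d₄ a * n : ℤ) : ℝ) / (c₁ : ℝ))
      = ∑ b ∈ (Finset.range c₁).filter (fun b => Nat.Coprime b c₁),
        ((jacobiSym (-1) c₁ : ℂ)) *
          ((jacobiSym (b : ℤ) c₁ : ℂ) * e ((((b : ℤ) * n : ℤ) : ℝ) / (c₁ : ℝ))) := by
    apply Finset.sum_bij (fun a _ => ((d₄ a : ℤ) : ZMod c₁).val)
    · -- maps into the target set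
      intro a ha
      obtain ⟨hac, hco⟩ := hmemS a ha
      simp only [Finset.mem_filter, Finset.mem_range]
      constructor
      · exact ZMod.val_lt _
      · -- d₄ a is a unit mod c₁
        have h := hzm a hac hco
        have hu : IsUnit ((d₄ a : ℤ) : ZMod c₁) := by
          apply IsUnit.of_mul_eq_one (-((8 : ZMod c₁) * (a : ZMod c₁)))
          linear_combination -h
        exact (ZMod.isUnit_iff_coprime _ _).mp (by rwa [hvalcast])
    · -- injectivity
      intro a₁ ha₁ a₂ ha₂ hval
      obtain ⟨hac₁, hco₁⟩ := hmemS a₁ ha₁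
      obtain ⟨hac₂, hco₂⟩ := hmemS a₂ ha₂
      have hcast : ((d₄ a₁ : ℤ) : ZMod c₁) = ((d₄ a₂ : ℤ) : ZMod c₁) := by
        have := congrArg (Nat.cast : ℕ → ZMod c₁) hval
        rwa [ZMod.natCast_val, ZMod.natCast_val, ZMod.cast_id, ZMod.cast_id] at this
      have h₁ := hzm a₁ hac₁ hco₁
      have h₂ := hzm a₂ hac₂ hco₂
      -- 8 * d₄ a₁ is a unit
      have hu : IsUnit ((8 : ZMod c₁) * ((d₄ a₁ : ℤ) : ZMod c₁)) := by
        apply IsUnit.of_mul_eq_one (-(a₁ : ZMod c₁))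
        linear_combination -h₁
      have heq : (a₁ : ZMod c₁) = (a₂ : ZMod c₁) := by
        apply hu.mul_left_cancel
        rw [hcast] at h₁ ⊢
        linear_combination h₁ - h₂
      have hmod : a₁ ≡ a₂ [MOD c₁] := (ZMod.natCast_eq_natCast_iff _ _ _).mp heq
      have hmod2 : a₁ ≡ a₂ [MOD 2] := by
        have o₁ := hodd_a a₁ hco₁
        have o₂ := hodd_a a₂ hco₂
        unfold Nat.ModEq; omega
      have := (Nat.modEq_and_modEq_iff_modEq_mul hcop2).mp ⟨hmod2, hmod⟩
      have hcc : a₁ % c = a₂ % c := by rwa [← hc2] at this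
      rwa [Nat.mod_eq_of_lt hac₁, Nat.mod_eq_of_lt hac₂] at hcc
    · -- surjectivity
      intro b hb
      simp only [Finset.mem_filter, Finset.mem_range] at hb
      obtain ⟨hbc, hbco⟩ := hb
      have hu : IsUnit ((8 : ZMod c₁) * (b : ZMod c₁)) := by
        have h8 : IsUnit ((8 : ℕ) : ZMod c₁) := (ZMod.isUnit_iff_coprime _ _).mpr hcop8
        have hbu : IsUnit ((b : ℕ) : ZMod c₁) := (ZMod.isUnit_iff_coprime _ _).mpr hbco
        push_cast at h8
        exact h8.mul hbu
      set u : ZMod c₁ := -(↑hu.unit⁻¹ : ZMod c₁) with hu_def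
      have huu : (8 : ZMod c₁) * (b : ZMod c₁) * u = -1 := by
        rw [hu_def, mul_neg, IsUnit.mul_val_inv]
      have hu_unit : IsUnit u := by
        apply IsUnit.of_mul_eq_one (-((8 : ZMod c₁) * (b : ZMod c₁)))
        linear_combination -huu
      set a₀ := u.val with ha₀
      set a := if a₀ % 2 = 1 then a₀ else a₀ + c₁ with ha_def
      have ha₀c : a₀ < c₁ := ZMod.val_lt u
      have hac : a < c := by rw [ha_def]; split <;> omega
      have haodd : a % 2 = 1 := by rw [ha_def]; split <;> omega
      have hacast : (a : ZMod c₁) = u := by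
        rw [ha_def]
        split
        · rw [ha₀, ZMod.natCast_val, ZMod.cast_id]
        · push_cast
          rw [ZMod.natCast_self, add_zero, ha₀, ZMod.natCast_val, ZMod.cast_id]
      have hacop₁ : Nat.Coprime a c₁ := by
        have := (ZMod.isUnit_iff_coprime a c₁).mp (by rwa [hacast])
        exact this
      have hacop : Nat.Coprime a c := by
        rw [hc2]
        apply Nat.Coprime.mul_right
        · rw [Nat.coprime_comm]; exact Nat.coprime_two_left.mpr (Nat.odd_iff.mpr haodd)
        · exact hacop₁
      refine ⟨a, Finset.mem_filter.mpr ⟨Finset.mem_range.mpr hac, hacop⟩, ?_⟩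
      -- show (d₄ a : ZMod c₁).val = b
      have hz := hzm a hac hacop
      have h8ab : (8 : ZMod c₁) * (a : ZMod c₁) * (b : ZMod c₁) = -1 := by
        rw [hacast]
        linear_combination huu
      have h8au : IsUnit ((8 : ZMod c₁) * (a : ZMod c₁)) := by
        apply IsUnit.of_mul_eq_one (-((d₄ a : ℤ) : ZMod c₁))
        linear_combination -hz
      have : ((d₄ a : ℤ) : ZMod c₁) = (b : ZMod c₁) := by
        apply h8au.mul_left_cancel
        linear_combination hz - h8ab
      rw [this, ZMod.val_cast_of_lt hbc]
    · -- values agree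
      intro a ha
      obtain ⟨hac, hco⟩ := hmemS a ha
      set b := ((d₄ a : ℤ) : ZMod c₁).val with hb_def
      have hbmod : (b : ℤ) = d₄ a % c₁ := by
        rw [hb_def]; exact_mod_cast ZMod.val_intCast (d₄ a)
      have hdvd : (c₁ : ℤ) ∣ d₄ a - b := by
        rw [hbmod]; exact Int.dvd_self_sub_of_emod_eq rfl
      obtain ⟨k, hk⟩ := hdvd
      -- congruence: 8 a b ≡ -1 mod c₁
      have hbd : (b : ℤ) ≡ d₄ a [ZMOD (c₁ : ℤ)] := Int.modEq_iff_dvd.mpr ⟨k, hk⟩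
      have hcong : (8 * (a : ℤ) * (b : ℤ)) % c₁ = (-1 : ℤ) % c₁ :=
        (Int.ModEq.mul_left (8 * (a : ℤ)) hbd).trans (hd₄ a hac hco)
      -- Jacobi symbol part
      have hbcop : Nat.Coprime b c₁ := by
        have hu : IsUnit ((d₄ a : ℤ) : ZMod c₁) := by
          apply IsUnit.of_mul_eq_one (-((8 : ZMod c₁) * (a : ZMod c₁)))
          linear_combination -hzm a hac hco
        exact (ZMod.isUnit_iff_coprime _ _).mp
          (by rw [hb_def, ZMod.natCast_val, ZMod.cast_id]; exact hu)
      have hjmul : jacobiSym (8 * (a : ℤ)) c₁ * jacobiSym (b : ℤ) c₁ = jacobiSym (-1) c₁ := by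
        rw [← jacobiSym.mul_left]
        exact jacobiSym.mod_left' hcong
      have hjsq : jacobiSym (b : ℤ) c₁ * jacobiSym (b : ℤ) c₁ = 1 := by
        have := jacobiSym.sq_one (a := (b : ℤ)) (b := c₁) (by
          rwa [Int.gcd_natCast_natCast])
        rwa [sq] at this
      have hj : jacobiSym (8 * (a : ℤ)) c₁ = jacobiSym (-1) c₁ * jacobiSym (b : ℤ) c₁ := by
        calc jacobiSym (8 * (a : ℤ)) c₁
            = jacobiSym (8 * (a : ℤ)) c₁ * (jacobiSym (b : ℤ) c₁ * jacobiSym (b : ℤ) c₁) := by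
              rw [hjsq, mul_one]
          _ = (jacobiSym (8 * (a : ℤ)) c₁ * jacobiSym (b : ℤ) c₁) * jacobiSym (b : ℤ) c₁ := by ring
          _ = jacobiSym (-1) c₁ * jacobiSym (b : ℤ) c₁ := by rw [hjmul]
      -- exponential part
      have hepart : e (((d₄ a * n : ℤ) : ℝ) / (c₁ : ℝ)) = e ((((b : ℤ) * n : ℤ) : ℝ) / (c₁ : ℝ)) := by
        have hc₁0 : (c₁ : ℝ) ≠ 0 := by exact_mod_cast (Nat.pos_of_ne_zero hne.1).ne'
        have hx : ((d₄ a * n : ℤ) : ℝ) / (c₁ : ℝ)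
            = ((k * n : ℤ) : ℝ) + (((b : ℤ) * n : ℤ) : ℝ) / (c₁ : ℝ) := by
          have hd : (d₄ a : ℝ) = (c₁ : ℝ) * k + b := by
            have : (d₄ a : ℤ) = c₁ * k + b := by linarith [hk]
            exact_mod_cast congrArg (Int.cast : ℤ → ℝ) this
          field_simp
          push_cast; rw [hd]; ring
        rw [hx, e_int_add]
      rw [hj, hepart]
      push_cast [jacobiSym.mul_left]
      ring
  rw [key, ← Finset.mul_sum, ← mul_assoc]
  congr 1
  -- epsilon part
  have h4 : c₁ % 4 = 1 ∨ c₁ % 4 = 3 := by omega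
  rw [jacobiSym.at_neg_one hoddO]
  rcases h4 with h | h
  · rw [ZMod.χ₄_nat_one_mod_four h]
    unfold epsd
    rw [if_pos h]
    simp
  · rw [ZMod.χ₄_nat_three_mod_four h]
    unfold epsd
    rw [if_neg (by omega)]
    simp [Complex.conj_I]
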